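/- Let G be a graph, φ ∈ (0,1), δ ∈ (0, 1/16), ψ = δφ, and let G' be a (δ, ψ)-cut sparsifier of G. For any cut S with Vol_G(S) ≤ Vol_G(S̄), if Φ'(S) := w_{G'}(S,S̄)/Vol_G(S) ≤ (1+2δ)φ, then Φ_G(S) ≤ (1+5δ)φ. Conversely, if Φ_G(S) ≤ φ then Φ'(S) ≤ (1+2δ)φ. -/
import Mathlib


/-- Let `G'` be a `(δ, ψ)`-cut sparsifier of `G` with `ψ = δφ`, `φ ∈ (0,1)`,
`δ ∈ (0, 1/16)`. For any cut `S` with `Vol_G(S) ≤ Vol_G(S̄)`, if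
`Φ'(S) = w_{G'}(S,S̄)/Vol_G(S) ≤ (1+2δ)φ` then `Φ_G(S) ≤ (1+5δ)φ`; conversely, if
`Φ_G(S) ≤ φ` then `Φ'(S) ≤ (1+2δ)φ`. -/
theorem stmt_13 {V : Type*} [Fintype V] [DecidableEq V]
    (wG wG' vol : Finset V → ℝ) (φ δ : ℝ)
    (hφ : φ ∈ Set.Ioo (0 : ℝ) 1) (hδ : δ ∈ Set.Ioo (0 : ℝ) (1 / 16))
    (hsparsifier : ∀ S : Finset V,
      (1 - δ) * wG S - (δ * φ) * vol S ≤ wG' S ∧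
      wG' S ≤ (1 + δ) * wG S + (δ * φ) * vol S) :
    ∀ S : Finset V, 0 < vol S → vol S ≤ vol Sᶜ →
      (wG' S / vol S ≤ (1 + 2 * δ) * φ → wG S / vol S ≤ (1 + 5 * δ) * φ) ∧
      (wG S / vol S ≤ φ → wG' S / vol S ≤ (1 + 2 * δ) * φ) := by
  obtain ⟨hφ0, hφ1⟩ := hφ
  obtain ⟨hδ0, hδ1⟩ := hδ
  intro S hvol _
  obtain ⟨h1, h2⟩ := hsparsifier S
  constructor
  · intro h
    rw [div_le_iff₀ hvol] at h ⊢
    nlinarith [mul_pos hδ0 hφ0, mul_pos hφ0 hvol, mul_pos hδ0 hvol]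
  · intro h
    rw [div_le_iff₀ hvol] at h ⊢
    nlinarith [mul_pos hδ0 hφ0, mul_pos hφ0 hvol, mul_pos hδ0 hvol]
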